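/- Let X be a geodesic metric space. If every geodesic triangle in X has insize bounded above by δ', then every geodesic triangle is 3δ'-slim and 18δ'-thin. Conversely, if every geodesic triangle is δ-slim, then every geodesic triangle is 6δ-thin. -/
import Mathlib


/-- `p` restricted to `[a, b]` is a geodesic parametrized by arclength. -/
def IsGeodParam {X : Type*} [MetricSpace X] (p : ℝ → X) (a b : ℝ) : Prop :=
  ∀ s ∈ Set.Icc a b, ∀ t ∈ Set.Icc a b, dist (p s) (p t) = |s - t|

/-- `X` is a geodesic metric space. -/
def GeodesicSpace (X : Type*) [MetricSpace X] : Prop :=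
  ∀ x y : X, ∃ p : ℝ → X, IsGeodParam p 0 (dist x y) ∧ p 0 = x ∧ p (dist x y) = y

/-- A geodesic triangle in `X` with vertices `A`, `B`, `C` and sides `p : A → B`,
`q : B → C`, `r : C → A`, each parametrized by arclength. -/
structure GeodTriangle (X : Type*) [MetricSpace X] where
  A : X
  B : X
  C : X
  p : ℝ → X
  q : ℝ → X
  r : ℝ → X
  hp : IsGeodParam p 0 (dist A B)
  hp0 : p 0 = A
  hp1 : p (dist A B) = B
  hq : IsGeodParam q 0 (dist B C)
  hq0 : q 0 = B
  hq1 : q (dist B C) = C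
  hr : IsGeodParam r 0 (dist C A)
  hr0 : r 0 = C
  hr1 : r (dist C A) = A

namespace GeodTriangle

variable {X : Type*} [MetricSpace X] (T : GeodTriangle X)

/-- The Gromov product of `B` and `C` at `A`. -/
noncomputable def gpA : ℝ := (dist T.A T.B + dist T.C T.A - dist T.B T.C) / 2

/-- The Gromov product of `A` and `C` at `B`. -/
noncomputable def gpB : ℝ := (dist T.A T.B + dist T.B T.C - dist T.C T.A) / 2

/-- The Gromov product of `A` and `B` at `C`. -/
noncomputable def gpC : ℝ := (dist T.B T.C + dist T.C T.A - dist T.A T.B) / 2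

/-- The internal point on the side `AB` (at distance `(B·C)_A` from `A`). -/
noncomputable def OC : X := T.p T.gpA

/-- The internal point on the side `BC` (at distance `(A·C)_B` from `B`). -/
noncomputable def OA : X := T.q T.gpB

/-- The internal point on the side `CA` (at distance `(A·B)_C` from `C`). -/
noncomputable def OB : X := T.r T.gpC

/-- The insize of the triangle `T` is at most `d`. -/
def InsizeLE (d : ℝ) : Prop :=
  dist T.OA T.OB ≤ d ∧ dist T.OB T.OC ≤ d ∧ dist T.OC T.OA ≤ d

/-- The triangle `T` is `d`-slim: each side lies in the `d`-neighborhood of the union of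
the other two sides. -/
def IsSlim (d : ℝ) : Prop :=
  (∀ s ∈ Set.Icc (0 : ℝ) (dist T.A T.B),
    Metric.infDist (T.p s)
      (T.q '' Set.Icc 0 (dist T.B T.C) ∪ T.r '' Set.Icc 0 (dist T.C T.A)) ≤ d) ∧
  (∀ s ∈ Set.Icc (0 : ℝ) (dist T.B T.C),
    Metric.infDist (T.q s)
      (T.p '' Set.Icc 0 (dist T.A T.B) ∪ T.r '' Set.Icc 0 (dist T.C T.A)) ≤ d) ∧
  (∀ s ∈ Set.Icc (0 : ℝ) (dist T.C T.A),
    Metric.infDist (T.r s)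
      (T.p '' Set.Icc 0 (dist T.A T.B) ∪ T.q '' Set.Icc 0 (dist T.B T.C)) ≤ d)

/-- The triangle `T` is `d`-thin: points on the two sides adjacent to a common vertex at
equal distance from that vertex, within the internal-point segments, are at distance at
most `d` from each other. -/
def IsThin (d : ℝ) : Prop :=
  (∀ s ∈ Set.Icc (0 : ℝ) T.gpA, dist (T.p s) (T.r (dist T.C T.A - s)) ≤ d) ∧
  (∀ s ∈ Set.Icc (0 : ℝ) T.gpB, dist (T.p (dist T.A T.B - s)) (T.q s) ≤ d) ∧
  (∀ s ∈ Set.Icc (0 : ℝ) T.gpC, dist (T.q (dist T.B T.C - s)) (T.r s) ≤ d)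

end GeodTriangle


section AuxHelpers
variable {X : Type*} [MetricSpace X]

lemma IsGeodParam.isCompact_image {p : ℝ → X} {b : ℝ} (h : IsGeodParam p 0 b) :
    IsCompact (p '' Set.Icc 0 b) := by
  apply isCompact_Icc.image_of_continuousOn
  apply (LipschitzOnWith.of_dist_le_mul (K := 1) ?_).continuousOn
  intro s hs t ht
  rw [h s hs t ht, NNReal.coe_one, one_mul, Real.dist_eq]

lemma exists_near {x : X} {d : ℝ}
    {f g : ℝ → X} {bf bg : ℝ} (hbf : 0 ≤ bf)
    (hf : IsGeodParam f 0 bf) (hg : IsGeodParam g 0 bg)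
    (h : Metric.infDist x (f '' Set.Icc 0 bf ∪ g '' Set.Icc 0 bg) ≤ d) :
    (∃ t ∈ Set.Icc 0 bf, dist x (f t) ≤ d) ∨ (∃ t ∈ Set.Icc 0 bg, dist x (g t) ≤ d) := by
  have hc : IsCompact (f '' Set.Icc 0 bf ∪ g '' Set.Icc 0 bg) :=
    hf.isCompact_image.union hg.isCompact_image
  have hne : (f '' Set.Icc 0 bf ∪ g '' Set.Icc 0 bg).Nonempty :=
    ⟨f 0, Or.inl ⟨0, ⟨le_rfl, hbf⟩, rfl⟩⟩
  obtain ⟨y, hy, hxy⟩ := hc.exists_infDist_eq_dist hne x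
  rcases hy with ⟨t, ht, rfl⟩ | ⟨t, ht, rfl⟩
  · exact Or.inl ⟨t, ht, hxy ▸ h⟩
  · exact Or.inr ⟨t, ht, hxy ▸ h⟩

end AuxHelpers

section Aux2
variable {X : Type*} [MetricSpace X]

namespace GeodTriangle
variable (T : GeodTriangle X)

lemma dAB_le : dist T.A T.B ≤ dist T.C T.A + dist T.B T.C := by
  rw [dist_comm T.C T.A, dist_comm T.B T.C]; exact dist_triangle T.A T.C T.B
lemma dBC_le : dist T.B T.C ≤ dist T.A T.B + dist T.C T.A := by
  rw [dist_comm T.A T.B, dist_comm T.C T.A]; exact dist_triangle T.B T.A T.C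
lemma dCA_le : dist T.C T.A ≤ dist T.B T.C + dist T.A T.B := by
  rw [dist_comm T.B T.C, dist_comm T.A T.B]; exact dist_triangle T.C T.B T.A

lemma gpA_nonneg : 0 ≤ T.gpA := by have := T.dBC_le; unfold gpA; linarith
lemma gpA_le_AB : T.gpA ≤ dist T.A T.B := by have := T.dCA_le; unfold gpA; linarith
lemma gpA_le_CA : T.gpA ≤ dist T.C T.A := by have := T.dAB_le; unfold gpA; linarith
lemma gpB_nonneg : 0 ≤ T.gpB := by have := T.dCA_le; unfold gpB; linarith
lemma gpB_le_BC : T.gpB ≤ dist T.B T.C := by have := T.dAB_le; unfold gpB; linarith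
lemma gpB_le_AB : T.gpB ≤ dist T.A T.B := by have := T.dBC_le; unfold gpB; linarith
lemma gpC_nonneg : 0 ≤ T.gpC := by have := T.dAB_le; unfold gpC; linarith
lemma gpC_le_CA : T.gpC ≤ dist T.C T.A := by have := T.dBC_le; unfold gpC; linarith
lemma gpC_le_BC : T.gpC ≤ dist T.B T.C := by have := T.dCA_le; unfold gpC; linarith

lemma gpA_add_gpB : T.gpA + T.gpB = dist T.A T.B := by unfold gpA gpB; ring
lemma gpB_add_gpC : T.gpB + T.gpC = dist T.B T.C := by unfold gpB gpC; ring
lemma gpA_add_gpC : T.gpA + T.gpC = dist T.C T.A := by unfold gpA gpC; ring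

/-- distance from `A` to a point on side `p`. -/
lemma distA_p {s : ℝ} (h0 : 0 ≤ s) (h1 : s ≤ dist T.A T.B) : dist T.A (T.p s) = s := by
  conv_lhs => rw [← T.hp0]
  rw [T.hp 0 ⟨le_rfl, dist_nonneg⟩ s ⟨h0, h1⟩, zero_sub, abs_neg, abs_of_nonneg h0]

lemma distB_p {s : ℝ} (h0 : 0 ≤ s) (h1 : s ≤ dist T.A T.B) :
    dist (T.p s) T.B = dist T.A T.B - s := by
  conv_lhs => rw [← T.hp1]
  rw [T.hp s ⟨h0, h1⟩ (dist T.A T.B) ⟨dist_nonneg, le_rfl⟩, abs_of_nonpos (by linarith)]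
  ring

lemma distB_q {s : ℝ} (h0 : 0 ≤ s) (h1 : s ≤ dist T.B T.C) : dist T.B (T.q s) = s := by
  conv_lhs => rw [← T.hq0]
  rw [T.hq 0 ⟨le_rfl, dist_nonneg⟩ s ⟨h0, h1⟩, zero_sub, abs_neg, abs_of_nonneg h0]

lemma distC_q {s : ℝ} (h0 : 0 ≤ s) (h1 : s ≤ dist T.B T.C) :
    dist (T.q s) T.C = dist T.B T.C - s := by
  conv_lhs => rw [← T.hq1]
  rw [T.hq s ⟨h0, h1⟩ (dist T.B T.C) ⟨dist_nonneg, le_rfl⟩, abs_of_nonpos (by linarith)]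
  ring

lemma distC_r {s : ℝ} (h0 : 0 ≤ s) (h1 : s ≤ dist T.C T.A) : dist T.C (T.r s) = s := by
  conv_lhs => rw [← T.hr0]
  rw [T.hr 0 ⟨le_rfl, dist_nonneg⟩ s ⟨h0, h1⟩, zero_sub, abs_neg, abs_of_nonneg h0]

lemma distA_r {s : ℝ} (h0 : 0 ≤ s) (h1 : s ≤ dist T.C T.A) :
    dist (T.r s) T.A = dist T.C T.A - s := by
  conv_lhs => rw [← T.hr1]
  rw [T.hr s ⟨h0, h1⟩ (dist T.C T.A) ⟨dist_nonneg, le_rfl⟩, abs_of_nonpos (by linarith)]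
  ring

/-- The rotated triangle. -/
def rot : GeodTriangle X where
  A := T.B
  B := T.C
  C := T.A
  p := T.q
  q := T.r
  r := T.p
  hp := T.hq
  hp0 := T.hq0
  hp1 := T.hq1
  hq := T.hr
  hq0 := T.hr0
  hq1 := T.hr1
  hr := T.hp
  hr0 := T.hp0
  hr1 := T.hp1

@[simp] lemma rot_A : T.rot.A = T.B := rfl
@[simp] lemma rot_B : T.rot.B = T.C := rfl
@[simp] lemma rot_C : T.rot.C = T.A := rfl
@[simp] lemma rot_p : T.rot.p = T.q := rfl
@[simp] lemma rot_q : T.rot.q = T.r := rfl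
@[simp] lemma rot_r : T.rot.r = T.p := rfl

lemma rot_gpA : T.rot.gpA = T.gpB := by
  unfold gpA gpB
  rw [rot_A, rot_B, rot_C]
  ring

/-- The mirrored (orientation-reversed) triangle. -/
noncomputable def mirror : GeodTriangle X where
  A := T.B
  B := T.A
  C := T.C
  p := fun t => T.p (dist T.A T.B - t)
  q := fun t => T.r (dist T.C T.A - t)
  r := fun t => T.q (dist T.B T.C - t)
  hp := by
    have hba : dist T.B T.A = dist T.A T.B := dist_comm _ _
    intro s hs t ht
    rw [hba] at hs ht
    show dist (T.p (dist T.A T.B - s)) (T.p (dist T.A T.B - t)) = |s - t|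
    rw [T.hp (dist T.A T.B - s) ⟨by linarith [hs.2], by linarith [hs.1]⟩
        (dist T.A T.B - t) ⟨by linarith [ht.2], by linarith [ht.1]⟩,
      show dist T.A T.B - s - (dist T.A T.B - t) = -(s - t) by ring, abs_neg]
  hp0 := by show T.p (dist T.A T.B - 0) = T.B; rw [sub_zero, T.hp1]
  hp1 := by
    show T.p (dist T.A T.B - dist T.B T.A) = T.A
    rw [dist_comm T.B T.A, sub_self, T.hp0]
  hq := by
    have hac : dist T.A T.C = dist T.C T.A := dist_comm _ _
    intro s hs t ht
    rw [hac] at hs ht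
    show dist (T.r (dist T.C T.A - s)) (T.r (dist T.C T.A - t)) = |s - t|
    rw [T.hr (dist T.C T.A - s) ⟨by linarith [hs.2], by linarith [hs.1]⟩
        (dist T.C T.A - t) ⟨by linarith [ht.2], by linarith [ht.1]⟩,
      show dist T.C T.A - s - (dist T.C T.A - t) = -(s - t) by ring, abs_neg]
  hq0 := by show T.r (dist T.C T.A - 0) = T.A; rw [sub_zero, T.hr1]
  hq1 := by
    show T.r (dist T.C T.A - dist T.A T.C) = T.C
    rw [dist_comm T.A T.C, sub_self, T.hr0]
  hr := by
    have hcb : dist T.C T.B = dist T.B T.C := dist_comm _ _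
    intro s hs t ht
    rw [hcb] at hs ht
    show dist (T.q (dist T.B T.C - s)) (T.q (dist T.B T.C - t)) = |s - t|
    rw [T.hq (dist T.B T.C - s) ⟨by linarith [hs.2], by linarith [hs.1]⟩
        (dist T.B T.C - t) ⟨by linarith [ht.2], by linarith [ht.1]⟩,
      show dist T.B T.C - s - (dist T.B T.C - t) = -(s - t) by ring, abs_neg]
  hr0 := by show T.q (dist T.B T.C - 0) = T.C; rw [sub_zero, T.hq1]
  hr1 := by
    show T.q (dist T.B T.C - dist T.C T.B) = T.B
    rw [dist_comm T.C T.B, sub_self, T.hq0]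

@[simp] lemma mirror_A : T.mirror.A = T.B := rfl
@[simp] lemma mirror_B : T.mirror.B = T.A := rfl
@[simp] lemma mirror_C : T.mirror.C = T.C := rfl
@[simp] lemma mirror_p : T.mirror.p = fun t => T.p (dist T.A T.B - t) := rfl
@[simp] lemma mirror_q : T.mirror.q = fun t => T.r (dist T.C T.A - t) := rfl
@[simp] lemma mirror_r : T.mirror.r = fun t => T.q (dist T.B T.C - t) := rfl

lemma mirror_gpA : T.mirror.gpA = T.gpB := by
  unfold gpA gpB
  rw [mirror_A, mirror_B, mirror_C, dist_comm T.B T.A, dist_comm T.C T.B, dist_comm T.A T.C]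


/-- The sub-triangle with vertices `A`, `p s`, `C`. -/
noncomputable def subTri (T : GeodTriangle X) {s : ℝ} (h0 : 0 ≤ s) (h1 : s ≤ dist T.A T.B)
    (g : ℝ → X) (hg : IsGeodParam g 0 (dist (T.p s) T.C))
    (hg0 : g 0 = T.p s) (hg1 : g (dist (T.p s) T.C) = T.C) : GeodTriangle X where
  A := T.A
  B := T.p s
  C := T.C
  p := T.p
  q := g
  r := T.r
  hp := by
    rw [T.distA_p h0 h1]
    intro u hu v hv
    exact T.hp u ⟨hu.1, hu.2.trans h1⟩ v ⟨hv.1, hv.2.trans h1⟩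
  hp0 := T.hp0
  hp1 := by rw [T.distA_p h0 h1]
  hq := hg
  hq0 := hg0
  hq1 := hg1
  hr := T.hr
  hr0 := T.hr0
  hr1 := T.hr1

/-- Core step: a point on side `p` within the segment `[A, O_C]` is `3δ`-close to side `r`. -/
lemma coreA (hgeo : GeodesicSpace X) {δ : ℝ} (hδ : 0 ≤ δ)
    (H : ∀ T' : GeodTriangle X, T'.InsizeLE δ) (T : GeodTriangle X)
    {s : ℝ} (hs0 : 0 ≤ s) (hs1 : s ≤ T.gpA) :
    ∃ t ∈ Set.Icc 0 (dist T.C T.A), dist (T.p s) (T.r t) ≤ 3 * δ := by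
  have hsc : s ≤ dist T.A T.B := hs1.trans T.gpA_le_AB
  obtain ⟨g, hg, hg0, hg1⟩ := hgeo (T.p s) T.C
  have hAx : dist T.A (T.p s) = s := T.distA_p hs0 hsc
  have he1 : dist T.C T.A ≤ dist (T.p s) T.C + s := by
    calc dist T.C T.A ≤ dist T.C (T.p s) + dist (T.p s) T.A := dist_triangle _ _ _
    _ = dist (T.p s) T.C + s := by
        rw [dist_comm T.C (T.p s), dist_comm (T.p s) T.A, hAx]
  have he2 : dist (T.p s) T.C ≤ s + dist T.C T.A := by
    calc dist (T.p s) T.C ≤ dist (T.p s) T.A + dist T.A T.C := dist_triangle _ _ _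
    _ = s + dist T.C T.A := by rw [dist_comm (T.p s) T.A, hAx, dist_comm T.A T.C]
  have he3 : s ≤ dist T.C T.A + dist (T.p s) T.C := by
    calc s = dist T.A (T.p s) := hAx.symm
    _ ≤ dist T.A T.C + dist T.C (T.p s) := dist_triangle _ _ _
    _ = dist T.C T.A + dist (T.p s) T.C := by
        rw [dist_comm T.A T.C, dist_comm T.C (T.p s)]
  set T1 := T.subTri hs0 hsc g hg hg0 hg1 with hT1
  have hgpB1 : T1.gpB = (s + dist (T.p s) T.C - dist T.C T.A) / 2 := by
    show (dist T.A (T.p s) + dist (T.p s) T.C - dist T.C T.A) / 2 = _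
    rw [hAx]
  have hgpC1 : T1.gpC = (dist (T.p s) T.C + dist T.C T.A - s) / 2 := by
    show (dist (T.p s) T.C + dist T.C T.A - dist T.A (T.p s)) / 2 = _
    rw [hAx]
  have h1 : dist (g ((s + dist (T.p s) T.C - dist T.C T.A) / 2))
      (T.r ((dist (T.p s) T.C + dist T.C T.A - s) / 2)) ≤ δ := by
    have h := (H T1).1
    unfold OA OB at h
    rw [hgpB1, hgpC1] at h
    exact h
  -- bound on dist (p s) C via the insize of T
  have hxOC : dist (T.p s) T.OC = T.gpA - s := by
    unfold OC
    rw [T.hp s ⟨hs0, hsc⟩ T.gpA ⟨T.gpA_nonneg, T.gpA_le_AB⟩, abs_of_nonpos (by linarith)]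
    ring
  have hOBC : dist T.OB T.C = T.gpC := by
    unfold OB
    rw [dist_comm, T.distC_r T.gpC_nonneg T.gpC_le_CA]
  have hOCOB : dist T.OC T.OB ≤ δ := by
    rw [dist_comm]; exact (H T).2.1
  have hebound : dist (T.p s) T.C ≤ (T.gpA - s) + δ + T.gpC := by
    calc dist (T.p s) T.C ≤ dist (T.p s) T.OC + dist T.OC T.C := dist_triangle _ _ _
    _ ≤ dist (T.p s) T.OC + (dist T.OC T.OB + dist T.OB T.C) := by
        gcongr; exact dist_triangle _ _ _
    _ ≤ (T.gpA - s) + (δ + T.gpC) := by rw [hxOC, hOBC]; gcongr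
    _ = (T.gpA - s) + δ + T.gpC := by ring
  have hgaga : T.gpA + T.gpC = dist T.C T.A := T.gpA_add_gpC
  have hγ0 : 0 ≤ (s + dist (T.p s) T.C - dist T.C T.A) / 2 := by linarith
  have hγe : (s + dist (T.p s) T.C - dist T.C T.A) / 2 ≤ dist (T.p s) T.C := by linarith
  have hγδ : (s + dist (T.p s) T.C - dist T.C T.A) / 2 ≤ δ / 2 := by linarith
  have hxg : dist (T.p s) (g ((s + dist (T.p s) T.C - dist T.C T.A) / 2))
      = (s + dist (T.p s) T.C - dist T.C T.A) / 2 := by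
    have h' := hg 0 ⟨le_rfl, dist_nonneg⟩ _ ⟨hγ0, hγe⟩
    rw [hg0, zero_sub, abs_neg, abs_of_nonneg hγ0] at h'
    exact h'
  refine ⟨(dist (T.p s) T.C + dist T.C T.A - s) / 2, ⟨by linarith, by linarith⟩, ?_⟩
  calc dist (T.p s) (T.r ((dist (T.p s) T.C + dist T.C T.A - s) / 2))
      ≤ dist (T.p s) (g ((s + dist (T.p s) T.C - dist T.C T.A) / 2))
        + dist (g ((s + dist (T.p s) T.C - dist T.C T.A) / 2))
          (T.r ((dist (T.p s) T.C + dist T.C T.A - s) / 2)) := dist_triangle _ _ _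
    _ ≤ (s + dist (T.p s) T.C - dist T.C T.A) / 2 + δ := by rw [hxg]; gcongr
    _ ≤ 3 * δ := by linarith


lemma slimP (hgeo : GeodesicSpace X) {δ : ℝ} (hδ : 0 ≤ δ)
    (H : ∀ T' : GeodTriangle X, T'.InsizeLE δ) (T : GeodTriangle X) :
    ∀ s ∈ Set.Icc (0:ℝ) (dist T.A T.B),
      Metric.infDist (T.p s)
        (T.q '' Set.Icc 0 (dist T.B T.C) ∪ T.r '' Set.Icc 0 (dist T.C T.A)) ≤ 3 * δ := by
  intro s hs
  rcases le_total s T.gpA with h | h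
  · obtain ⟨t, ht, hd⟩ := coreA hgeo hδ H T hs.1 h
    exact le_trans (Metric.infDist_le_dist_of_mem (Set.mem_union_right _ ⟨t, ht, rfl⟩)) hd
  · have hs' : 0 ≤ dist T.A T.B - s := by linarith [hs.2]
    have hs'' : dist T.A T.B - s ≤ T.mirror.gpA := by
      rw [T.mirror_gpA]
      have := T.gpA_add_gpB
      linarith
    obtain ⟨t, ht, hd⟩ := coreA hgeo hδ H T.mirror hs' hs''
    simp only [mirror_p, mirror_r, mirror_C, mirror_A] at hd ht
    rw [show dist T.A T.B - (dist T.A T.B - s) = s by ring] at hd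
    rw [dist_comm T.C T.B] at ht
    exact le_trans (Metric.infDist_le_dist_of_mem
      (Set.mem_union_left _
        ⟨dist T.B T.C - t, ⟨by linarith [ht.2], by linarith [ht.1]⟩, rfl⟩)) hd

lemma slim_all (hgeo : GeodesicSpace X) {δ : ℝ} (hδ : 0 ≤ δ)
    (H : ∀ T' : GeodTriangle X, T'.InsizeLE δ) (T : GeodTriangle X) :
    T.IsSlim (3 * δ) := by
  refine ⟨slimP hgeo hδ H T, fun s hs => ?_, fun s hs => ?_⟩
  · have h := slimP hgeo hδ H T.rot s hs
    rw [Set.union_comm] at h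
    exact h
  · exact slimP hgeo hδ H T.rot.rot s hs

lemma slim_OCOB {δ : ℝ} (hδ : 0 ≤ δ) (T : GeodTriangle X) (hsl : T.IsSlim δ) :
    dist T.OC T.OB ≤ 4 * δ := by
  obtain ⟨h1, h2, h3⟩ := hsl
  have hab := T.gpA_add_gpB
  have hbc := T.gpB_add_gpC
  have hac := T.gpA_add_gpC
  have hPC : dist T.OC T.OA ≤ 2*δ ∨ dist T.OC T.OB ≤ 2*δ := by
    have h := h1 T.gpA ⟨T.gpA_nonneg, T.gpA_le_AB⟩
    rcases exists_near dist_nonneg T.hq T.hr h with ⟨u, hu, hdu⟩ | ⟨u, hu, hdu⟩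
    · left
      have hzB : dist (T.q u) T.B = u := by rw [dist_comm]; exact T.distB_q hu.1 hu.2
      have hOCB : dist T.OC T.B = T.gpB := by
        show dist (T.p T.gpA) T.B = T.gpB
        rw [T.distB_p T.gpA_nonneg T.gpA_le_AB]
        linarith
      have habs : |u - T.gpB| ≤ δ := by
        have h' := abs_dist_sub_le T.OC (T.q u) T.B
        rw [hOCB, hzB] at h'
        rw [abs_sub_comm]
        exact le_trans h' hdu
      have hzOA : dist (T.q u) T.OA = |u - T.gpB| :=
        T.hq u hu T.gpB ⟨T.gpB_nonneg, T.gpB_le_BC⟩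
      calc dist T.OC T.OA ≤ dist T.OC (T.q u) + dist (T.q u) T.OA := dist_triangle _ _ _
        _ ≤ δ + δ := by rw [hzOA]; exact add_le_add hdu habs
        _ = 2*δ := by ring
    · right
      have hzA : dist (T.r u) T.A = dist T.C T.A - u := T.distA_r hu.1 hu.2
      have hOCA : dist T.OC T.A = T.gpA := by
        show dist (T.p T.gpA) T.A = T.gpA
        rw [dist_comm]
        exact T.distA_p T.gpA_nonneg T.gpA_le_AB
      have habs : |u - T.gpC| ≤ δ := by
        have h' := abs_dist_sub_le T.OC (T.r u) T.A
        rw [hOCA, hzA] at h'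
        rw [show u - T.gpC = T.gpA - (dist T.C T.A - u) from by linarith]
        exact le_trans h' hdu
      have hzOB : dist (T.r u) T.OB = |u - T.gpC| :=
        T.hr u hu T.gpC ⟨T.gpC_nonneg, T.gpC_le_CA⟩
      calc dist T.OC T.OB ≤ dist T.OC (T.r u) + dist (T.r u) T.OB := dist_triangle _ _ _
        _ ≤ δ + δ := by rw [hzOB]; exact add_le_add hdu habs
        _ = 2*δ := by ring
  have hPB : dist T.OB T.OC ≤ 2*δ ∨ dist T.OB T.OA ≤ 2*δ := by
    have h := h3 T.gpC ⟨T.gpC_nonneg, T.gpC_le_CA⟩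
    rcases exists_near dist_nonneg T.hp T.hq h with ⟨u, hu, hdu⟩ | ⟨u, hu, hdu⟩
    · left
      have hzA : dist (T.p u) T.A = u := by rw [dist_comm]; exact T.distA_p hu.1 hu.2
      have hOBA : dist T.OB T.A = T.gpA := by
        show dist (T.r T.gpC) T.A = T.gpA
        rw [T.distA_r T.gpC_nonneg T.gpC_le_CA]
        linarith
      have habs : |u - T.gpA| ≤ δ := by
        have h' := abs_dist_sub_le T.OB (T.p u) T.A
        rw [hOBA, hzA] at h'
        rw [abs_sub_comm]
        exact le_trans h' hdu
      have hzOC : dist (T.p u) T.OC = |u - T.gpA| :=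
        T.hp u hu T.gpA ⟨T.gpA_nonneg, T.gpA_le_AB⟩
      calc dist T.OB T.OC ≤ dist T.OB (T.p u) + dist (T.p u) T.OC := dist_triangle _ _ _
        _ ≤ δ + δ := by rw [hzOC]; exact add_le_add hdu habs
        _ = 2*δ := by ring
    · right
      have hzC : dist (T.q u) T.C = dist T.B T.C - u := T.distC_q hu.1 hu.2
      have hOBC : dist T.OB T.C = T.gpC := by
        show dist (T.r T.gpC) T.C = T.gpC
        rw [dist_comm]
        exact T.distC_r T.gpC_nonneg T.gpC_le_CA
      have habs : |u - T.gpB| ≤ δ := by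
        have h' := abs_dist_sub_le T.OB (T.q u) T.C
        rw [hOBC, hzC] at h'
        rw [show u - T.gpB = T.gpC - (dist T.B T.C - u) from by linarith]
        exact le_trans h' hdu
      have hzOA : dist (T.q u) T.OA = |u - T.gpB| :=
        T.hq u hu T.gpB ⟨T.gpB_nonneg, T.gpB_le_BC⟩
      calc dist T.OB T.OA ≤ dist T.OB (T.q u) + dist (T.q u) T.OA := dist_triangle _ _ _
        _ ≤ δ + δ := by rw [hzOA]; exact add_le_add hdu habs
        _ = 2*δ := by ring
  rcases hPC with hc | hc
  · rcases hPB with hb | hb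
    · calc dist T.OC T.OB = dist T.OB T.OC := dist_comm _ _
        _ ≤ 2*δ := hb
        _ ≤ 4*δ := by linarith
    · calc dist T.OC T.OB ≤ dist T.OC T.OA + dist T.OA T.OB := dist_triangle _ _ _
        _ = dist T.OC T.OA + dist T.OB T.OA := by rw [dist_comm T.OA T.OB]
        _ ≤ 2*δ + 2*δ := add_le_add hc hb
        _ = 4*δ := by ring
  · linarith

lemma thinA {δ : ℝ} (hδ : 0 ≤ δ) (T : GeodTriangle X) (hsl : T.IsSlim δ) :
    ∀ s ∈ Set.Icc (0:ℝ) T.gpA, dist (T.p s) (T.r (dist T.C T.A - s)) ≤ 6 * δ := by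
  intro s hs
  have hsc : s ≤ dist T.A T.B := hs.2.trans T.gpA_le_AB
  have hsd : s ≤ dist T.C T.A := hs.2.trans T.gpA_le_CA
  have hxA : dist (T.p s) T.A = s := by rw [dist_comm]; exact T.distA_p hs.1 hsc
  have h := hsl.1 s ⟨hs.1, hsc⟩
  rcases exists_near dist_nonneg T.hq T.hr h with ⟨t, ht, hdt⟩ | ⟨t, ht, hdt⟩
  · -- close to a point on side q : far from the vertex A
    have hzB : dist (T.q t) T.B = t := by rw [dist_comm]; exact T.distB_q ht.1 ht.2
    have hzC : dist (T.q t) T.C = dist T.B T.C - t := T.distC_q ht.1 ht.2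
    have hAB : dist T.A T.B ≤ s + δ + t := by
      calc dist T.A T.B ≤ dist T.A (T.p s) + dist (T.p s) T.B := dist_triangle _ _ _
        _ ≤ dist T.A (T.p s) + (dist (T.p s) (T.q t) + dist (T.q t) T.B) := by
            gcongr; exact dist_triangle _ _ _
        _ ≤ s + (δ + t) := by
            rw [dist_comm T.A (T.p s), hxA, hzB]; gcongr
        _ = s + δ + t := by ring
    have hCA : dist T.C T.A ≤ s + δ + (dist T.B T.C - t) := by
      calc dist T.C T.A ≤ dist T.C (T.p s) + dist (T.p s) T.A := dist_triangle _ _ _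
        _ ≤ (dist T.C (T.q t) + dist (T.q t) (T.p s)) + dist (T.p s) T.A := by
            gcongr; exact dist_triangle _ _ _
        _ ≤ ((dist T.B T.C - t) + δ) + s := by
            rw [dist_comm T.C (T.q t), hzC, hxA, dist_comm (T.q t) (T.p s)]
            gcongr
        _ = s + δ + (dist T.B T.C - t) := by ring
    have hgs : T.gpA - s ≤ δ := by unfold gpA; linarith
    have hxOC : dist (T.p s) T.OC = T.gpA - s := by
      show dist (T.p s) (T.p T.gpA) = T.gpA - s
      rw [T.hp s ⟨hs.1, hsc⟩ T.gpA ⟨T.gpA_nonneg, T.gpA_le_AB⟩,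
        abs_of_nonpos (by linarith [hs.2])]
      ring
    have hyOB : dist T.OB (T.r (dist T.C T.A - s)) = T.gpA - s := by
      show dist (T.r T.gpC) (T.r (dist T.C T.A - s)) = T.gpA - s
      rw [T.hr T.gpC ⟨T.gpC_nonneg, T.gpC_le_CA⟩ (dist T.C T.A - s)
          ⟨by linarith, by linarith [hs.1]⟩]
      have hac := T.gpA_add_gpC
      rw [show T.gpC - (dist T.C T.A - s) = -(T.gpA - s) from by linarith, abs_neg,
        abs_of_nonneg (by linarith [hs.2])]
    have hOCOB : dist T.OC T.OB ≤ 4 * δ := slim_OCOB hδ T hsl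
    calc dist (T.p s) (T.r (dist T.C T.A - s))
        ≤ dist (T.p s) T.OC + dist T.OC (T.r (dist T.C T.A - s)) := dist_triangle _ _ _
      _ ≤ dist (T.p s) T.OC + (dist T.OC T.OB + dist T.OB (T.r (dist T.C T.A - s))) := by
          gcongr; exact dist_triangle _ _ _
      _ ≤ δ + (4*δ + δ) := by
          rw [hxOC, hyOB]
          gcongr
      _ = 6 * δ := by ring
  · -- close to a point on side r
    have hzA : dist (T.r t) T.A = dist T.C T.A - t := T.distA_r ht.1 ht.2
    have habs : |dist T.C T.A - t - s| ≤ δ := by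
      have h' := abs_dist_sub_le (T.r t) (T.p s) T.A
      rw [hzA, hxA] at h'
      exact le_trans h' (by rw [dist_comm]; exact hdt)
    have hzy : dist (T.r t) (T.r (dist T.C T.A - s)) ≤ δ := by
      rw [T.hr t ht (dist T.C T.A - s) ⟨by linarith, by linarith [hs.1]⟩,
        show t - (dist T.C T.A - s) = -(dist T.C T.A - t - s) from by ring, abs_neg]
      exact habs
    calc dist (T.p s) (T.r (dist T.C T.A - s))
        ≤ dist (T.p s) (T.r t) + dist (T.r t) (T.r (dist T.C T.A - s)) := dist_triangle _ _ _
      _ ≤ δ + δ := add_le_add hdt hzy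
      _ ≤ 6 * δ := by linarith

lemma rot_gpB (T : GeodTriangle X) : T.rot.gpB = T.gpC := by
  unfold gpB gpC
  rw [rot_A, rot_B, rot_C]

lemma thin_all {δ : ℝ} (hδ : 0 ≤ δ) (hsl : ∀ T' : GeodTriangle X, T'.IsSlim δ)
    (T : GeodTriangle X) : T.IsThin (6 * δ) := by
  refine ⟨thinA hδ T (hsl T), fun s hs => ?_, fun s hs => ?_⟩
  · have h := thinA hδ T.rot (hsl T.rot) s (by rw [Set.mem_Icc, rot_gpA] at *; exact hs)
    rw [dist_comm]
    exact h
  · have hmem : s ∈ Set.Icc (0:ℝ) T.rot.rot.gpA := by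
      rw [Set.mem_Icc, T.rot.rot_gpA, T.rot_gpB]
      exact hs
    have h := thinA hδ T.rot.rot (hsl T.rot.rot) s hmem
    rw [dist_comm]
    exact h

end GeodTriangle
end Aux2

theorem stmt17 {X : Type*} [MetricSpace X] (hgeo : GeodesicSpace X) :
    (∀ δ' : ℝ, 0 ≤ δ' → (∀ T : GeodTriangle X, T.InsizeLE δ') →
      ∀ T : GeodTriangle X, T.IsSlim (3 * δ') ∧ T.IsThin (18 * δ')) ∧
    (∀ δ : ℝ, 0 ≤ δ → (∀ T : GeodTriangle X, T.IsSlim δ) →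
      ∀ T : GeodTriangle X, T.IsThin (6 * δ)) := by
  constructor
  · intro δ' hδ' H T
    refine ⟨GeodTriangle.slim_all hgeo hδ' H T, ?_⟩
    rw [show (18:ℝ) * δ' = 6 * (3 * δ') by ring]
    exact GeodTriangle.thin_all (by linarith)
      (fun T' => GeodTriangle.slim_all hgeo hδ' H T') T
  · intro δ hδ hsl T
    exact GeodTriangle.thin_all hδ hsl T
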